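/- arXiv:math/0701666 — 5 statements merged into one kernel-verified Lean document; each statement's English description precedes it below -/
import Mathlib

section
/- Let m ≥ 2 be an integer, let V be a 2m-dimensional vector space over ℤ/2 with a fixed basis 𝒰, and let H be a subspace of V of dimension at least m. Then there exists a nonzero element α of H whose support with respect to 𝒰 (the set of basis vectors appearing with coefficient 1 in the expansion of α) has cardinality at most m. -/
lemma zmod2_ne_zero : ∀ c : ZMod 2, c ≠ 0 → c = 1 := by decide

/-- Proposition "quality control": if `V` is a `2m`-dimensional vector space over `ℤ/2`
with basis `b` and `H` is a subspace of dimension at least `m` (`m ≥ 2`), then some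
nonzero `α ∈ H` has support of cardinality at most `m` with respect to `b`. -/
theorem stmt_0 {m : ℕ} (hm : 2 ≤ m) {V : Type*} [AddCommGroup V] [Module (ZMod 2) V]
    {ι : Type*} [Fintype ι] (b : Module.Basis ι (ZMod 2) V) (hcard : Fintype.card ι = 2 * m)
    (H : Submodule (ZMod 2) V) (hH : m ≤ Module.finrank (ZMod 2) H) :
    ∃ α ∈ H, α ≠ 0 ∧ (b.repr α).support.card ≤ m := by
  classical
  by_contra hcon
  push_neg at hcon
  -- hcon : ∀ α ∈ H, α ≠ 0 → m < (b.repr α).support.card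
  haveI : Module.Finite (ZMod 2) V := Module.Finite.of_basis b
  -- Key claim: the indicator of every (m+1)-set is in H.
  have key : ∀ A : Finset ι, A.card = m + 1 → (∑ u ∈ A, b u) ∈ H := by
    intro A hA
    obtain ⟨i, hi⟩ : A.Nonempty := by rw [← Finset.card_pos, hA]; omega
    set T : Finset ι := (A.erase i)ᶜ with hT
    have hTcard : T.card = m := by
      rw [hT, Finset.card_compl, Finset.card_erase_of_mem hi, hA, hcard]; omega
    have hiT : i ∈ T := by
      rw [hT, Finset.mem_compl]; exact fun h => (Finset.notMem_erase i A) h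
    -- the projection map
    let π : H →ₗ[ZMod 2] ({x // x ∈ T} → ZMod 2) :=
      { toFun := fun x t => b.repr (x : V) t
        map_add' := by intros; ext t; simp
        map_smul' := by intros; ext t; simp }
    have hinj : Function.Injective π := by
      rw [← LinearMap.ker_eq_bot, LinearMap.ker_eq_bot']
      intro x hx
      have hsupp : (b.repr (x : V)).support ⊆ A.erase i := by
        intro u hu
        by_contra hu'
        have : (⟨u, by rwa [hT, Finset.mem_compl]⟩ : {x // x ∈ T}) ∈ Set.univ := trivial
        have := congrFun hx (⟨u, by rwa [hT, Finset.mem_compl]⟩ : {x // x ∈ T})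
        simp only [π, LinearMap.coe_mk, AddHom.coe_mk, Pi.zero_apply] at this
        exact (Finsupp.mem_support_iff.mp hu) this
      have hle : (b.repr (x : V)).support.card ≤ m := by
        calc (b.repr (x : V)).support.card ≤ (A.erase i).card :=
            Finset.card_le_card hsupp
          _ = m := by rw [Finset.card_erase_of_mem hi, hA]; omega
      by_contra hx0
      have hxV : (x : V) ≠ 0 := fun h => hx0 (Subtype.ext h)
      exact absurd hle (not_le.mpr (hcon _ x.2 hxV))
    have hfr : Module.finrank (ZMod 2) ({x // x ∈ T} → ZMod 2) = m := by
      rw [Module.finrank_pi, Fintype.card_coe, hTcard]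
    have hrank : Module.finrank (ZMod 2) H
        = Module.finrank (ZMod 2) ({x // x ∈ T} → ZMod 2) := by
      have h1 := LinearMap.finrank_le_finrank_of_injective hinj
      omega
    have hsurj : Function.Surjective π :=
      (LinearMap.injective_iff_surjective_of_finrank_eq_finrank hrank).mp hinj
    obtain ⟨x, hx⟩ := hsurj (fun t => if (t : ι) = i then 1 else 0)
    set α : V := (x : V) with hαdef
    have hαH : α ∈ H := x.2
    have hproj : ∀ u (hu : u ∈ T), b.repr α u = if u = i then 1 else 0 := by
      intro u hu
      have := congrFun hx ⟨u, hu⟩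
      simpa [π] using this
    have hαne : α ≠ 0 := by
      intro h
      have := hproj i hiT
      rw [h] at this
      simp at this
    have hsubA : (b.repr α).support ⊆ A := by
      intro u hu
      by_contra huA
      have huT : u ∈ T := by
        rw [hT, Finset.mem_compl]
        exact fun h => huA (Finset.mem_of_mem_erase h)
      have huni : u ≠ i := fun h => huA (h ▸ hi)
      have := hproj u huT
      rw [if_neg huni] at this
      exact (Finsupp.mem_support_iff.mp hu) this
    have hsuppeq : (b.repr α).support = A := by
      apply Finset.eq_of_subset_of_card_le hsubA
      have := hcon α hαH hαne
      have hle : (b.repr α).support.card ≤ A.card := Finset.card_le_card hsubA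
      omega
    have hαeq : α = ∑ u ∈ A, b u := by
      apply b.repr.injective
      rw [map_sum]
      ext u
      simp only [Module.Basis.repr_self, Finsupp.finset_sum_apply, Finsupp.single_apply,
        Finset.sum_ite_eq']
      by_cases huA : u ∈ A
      · rw [if_pos huA]
        have : u ∈ (b.repr α).support := hsuppeq ▸ huA
        exact zmod2_ne_zero _ (Finsupp.mem_support_iff.mp this)
      · rw [if_neg huA]
        have : u ∉ (b.repr α).support := hsuppeq ▸ huA
        exact Finsupp.notMem_support_iff.mp this
    exact hαeq ▸ hαH
  -- Now build two (m+1)-sets differing in one element.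
  obtain ⟨A, -, hA⟩ := Finset.exists_subset_card_eq
    (show m + 1 ≤ (Finset.univ : Finset ι).card by rw [Finset.card_univ, hcard]; omega)
  obtain ⟨i, hi⟩ : A.Nonempty := by rw [← Finset.card_pos, hA]; omega
  obtain ⟨j, hj⟩ : Aᶜ.Nonempty := by
    rw [← Finset.card_pos, Finset.card_compl, hA, hcard]; omega
  rw [Finset.mem_compl] at hj
  have hji : j ≠ i := fun h => hj (h ▸ hi)
  set B : Finset ι := insert j (A.erase i) with hBdef
  have hB : B.card = m + 1 := by
    rw [hBdef, Finset.card_insert_of_notMem (fun h => hj (Finset.mem_of_mem_erase h)),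
      Finset.card_erase_of_mem hi, hA]
    omega
  have hAH := key A hA
  have hBH := key B hB
  have hγH : (∑ u ∈ A, b u) + (∑ u ∈ B, b u) ∈ H := H.add_mem hAH hBH
  have hsplitA : (∑ u ∈ A, b u) = b i + ∑ u ∈ A.erase i, b u :=
    (Finset.add_sum_erase A b hi).symm
  have hsplitB : (∑ u ∈ B, b u) = b j + ∑ u ∈ A.erase i, b u := by
    rw [hBdef, Finset.sum_insert (fun h => hj (Finset.mem_of_mem_erase h))]
  have hγeq : (∑ u ∈ A, b u) + (∑ u ∈ B, b u) = b i + b j := by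
    rw [hsplitA, hsplitB]
    have h2 : ∀ x : V, x + x = 0 := by
      intro x
      have hx2 : x + x = (2 : ZMod 2) • x := by
        rw [show (2 : ZMod 2) = 1 + 1 by decide, add_smul, one_smul]
      rw [hx2, show (2 : ZMod 2) = 0 by decide, zero_smul]
    set s : V := ∑ u ∈ A.erase i, b u with hs
    calc (b i + s) + (b j + s) = (b i + b j) + (s + s) := by abel
      _ = b i + b j := by rw [h2 s, add_zero]
  rw [hγeq] at hγH
  refine hcon (b i + b j) hγH ?_ |>.not_ge ?_ |>.elim
  · intro h
    have := congrArg (fun v => b.repr v i) h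
    simp [Finsupp.single_apply, hji] at this
  · have hsub : (b.repr (b i + b j)).support ⊆ {i, j} := by
      intro u hu
      rw [Finsupp.mem_support_iff] at hu
      simp only [map_add, Module.Basis.repr_self, Finsupp.add_apply, Finsupp.single_apply] at hu
      by_contra hnot
      simp only [Finset.mem_insert, Finset.mem_singleton, not_or] at hnot
      rw [if_neg (fun h => hnot.1 h.symm), if_neg (fun h => hnot.2 h.symm)] at hu
      exact hu (by ring)
    calc (b.repr (b i + b j)).support.card ≤ ({i, j} : Finset ι).card :=
        Finset.card_le_card hsub
      _ ≤ 2 := Finset.card_insert_le _ _ |>.trans (by simp)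
      _ ≤ m := hm
end

section
/- Let m ≥ 2 be an integer, let V be a 2m-dimensional ℤ/2-vector space with basis 𝒰, and let H be a subspace of dimension at least m. If some β ∈ H has support of cardinality k ≥ m+2 with respect to 𝒰, then there exists α ∈ H with 0 < ‖α‖_𝒰 ≤ m. -/
set_option maxHeartbeats 800000


/-- Case I of Proposition "quality control": if `V` is `2m`-dimensional over `ℤ/2` with
basis `b`, `H` a subspace of dimension at least `m` (`m ≥ 2`), and some `β ∈ H` has
support of cardinality `k ≥ m + 2`, then some `α ∈ H` satisfies `0 < ‖α‖ ≤ m`. -/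
theorem stmt_1 {m : ℕ} (hm : 2 ≤ m) {V : Type*} [AddCommGroup V] [Module (ZMod 2) V]
    {ι : Type*} [Fintype ι] (b : Module.Basis ι (ZMod 2) V) (hcard : Fintype.card ι = 2 * m)
    (H : Submodule (ZMod 2) V) (hH : m ≤ Module.finrank (ZMod 2) H)
    (β : V) (hβ : β ∈ H) (k : ℕ) (hk : (b.repr β).support.card = k) (hkm : m + 2 ≤ k) :
    ∃ α ∈ H, 0 < (b.repr α).support.card ∧ (b.repr α).support.card ≤ m := by
  classical
  have hFD : FiniteDimensional (ZMod 2) V := b.finiteDimensional_of_finite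
  have hfV : Module.finrank (ZMod 2) V = 2 * m := by
    rw [Module.finrank_eq_card_basis b, hcard]
  set S : Finset ι := (b.repr β).support with hS
  set L : Submodule (ZMod 2) V := Submodule.span (ZMod 2) (b '' (S : Set ι)) with hL
  -- finrank of L is k
  have hTcard : (S.image b).card = k := by
    rw [Finset.card_image_of_injective _ b.injective, hk]
  have hli : LinearIndependent (ZMod 2) ((↑) : ((S.image b : Finset V) : Set V) → V) :=
    ((linearIndepOn_id_range_iff b.injective).2 b.linearIndependent).mono (by
      intro x hx
      simp only [Finset.coe_image, Set.mem_image, Finset.mem_coe] at hx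
      obtain ⟨i, _, rfl⟩ := hx
      exact Set.mem_range_self i)
  have hfL : Module.finrank (ZMod 2) L = k := by
    have : ((S.image b : Finset V) : Set V) = b '' (S : Set ι) := by
      simp [Finset.coe_image]
    rw [hL, ← this, finrank_span_finset_eq_card hli, hTcard]
  -- k ≤ 2m
  have hk2m : k ≤ 2 * m := by
    rw [← hk, ← hcard]
    exact Finset.card_le_univ _
  -- finrank (H ⊓ L) ≥ 2
  have hsum : Module.finrank (ZMod 2) ↥(H ⊔ L) + Module.finrank (ZMod 2) ↥(H ⊓ L)
      = Module.finrank (ZMod 2) H + Module.finrank (ZMod 2) L :=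
    Submodule.finrank_sup_add_finrank_inf_eq H L
  have hsup_le : Module.finrank (ZMod 2) ↥(H ⊔ L) ≤ 2 * m := by
    rw [← hfV]; exact Submodule.finrank_le _
  have hinf : 2 ≤ Module.finrank (ZMod 2) ↥(H ⊓ L) := by omega
  -- pick α₁ ∈ H ⊓ L not in span {β}
  have hne : ¬ (H ⊓ L ≤ Submodule.span (ZMod 2) {β}) := by
    intro hle
    have h1 : Module.finrank (ZMod 2) ↥(H ⊓ L)
        ≤ Module.finrank (ZMod 2) (Submodule.span (ZMod 2) ({β} : Set V)) :=
      Submodule.finrank_mono hle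
    have h2 : Module.finrank (ZMod 2) (Submodule.span (ZMod 2) ({β} : Set V)) ≤ 1 :=
      le_trans (finrank_span_le_card _) (by simp)
    omega
  obtain ⟨α₁, hα₁mem, hα₁ns⟩ := Set.not_subset.1 hne
  have hα₁H : α₁ ∈ H := hα₁mem.1
  have hα₁L : α₁ ∈ L := hα₁mem.2
  have hα₁0 : α₁ ≠ 0 := fun h => hα₁ns (h ▸ (Submodule.span (ZMod 2) {β}).zero_mem)
  have hα₁β : α₁ ≠ β := fun h => hα₁ns (by rw [h]; exact Submodule.mem_span_singleton_self β)
  set A : Finset ι := (b.repr α₁).support with hA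
  have hAS : A ⊆ S := by
    have := Module.Basis.repr_support_subset_of_mem_span b (S : Set ι) hα₁L
    exact fun i hi => this hi
  have hApos : 0 < A.card := by
    rw [Finset.card_pos, Finset.nonempty_iff_ne_empty]
    intro h
    apply hα₁0
    have : b.repr α₁ = 0 := by
      ext i
      by_contra hc
      exact (Finset.notMem_empty i) (h ▸ Finsupp.mem_support_iff.2 hc)
    have := congrArg (b.repr.symm) this
    simpa using this
  -- key ZMod 2 fact
  have key : ∀ x y : ZMod 2, (y ≠ 0 → x ≠ 0) → (x + y ≠ 0 ↔ x ≠ 0 ∧ y = 0) := by decide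
  set α₂ : V := β + α₁ with hα₂
  have hα₂H : α₂ ∈ H := H.add_mem hβ hα₁H
  have hsupp2 : (b.repr α₂).support = S \ A := by
    ext i
    simp only [hα₂, map_add, Finsupp.mem_support_iff, Finsupp.add_apply, Finset.mem_sdiff,
      hS, hA, Finsupp.mem_support_iff]
    rw [not_not]
    exact key _ _ (fun hg => Finsupp.mem_support_iff.1 (hAS (Finsupp.mem_support_iff.2 hg)))
  have hcard2 : (b.repr α₂).support.card = k - A.card := by
    rw [hsupp2, Finset.card_sdiff_of_subset hAS, hk]
  by_cases hcase : A.card ≤ m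
  · exact ⟨α₁, hα₁H, hApos, hcase⟩
  · refine ⟨α₂, hα₂H, ?_, ?_⟩
    · -- α₂ ≠ 0 since α₁ ≠ β (char 2)
      have hα₂0 : α₂ ≠ 0 := by
        intro h
        apply hα₁β
        have : α₁ = -β := by rw [eq_neg_iff_add_eq_zero, add_comm]; exact h
        rw [this]
        calc (-β) = (-1 : ZMod 2) • β := (neg_one_smul _ _).symm
          _ = (1 : ZMod 2) • β := by congr 1
          _ = β := one_smul _ _
      rw [Finset.card_pos, Finset.nonempty_iff_ne_empty]
      intro h
      apply hα₂0
      have : b.repr α₂ = 0 := by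
        ext i
        by_contra hc
        exact (Finset.notMem_empty i) (h ▸ Finsupp.mem_support_iff.2 hc)
      have := congrArg (b.repr.symm) this
      simpa using this
    · omega
end

section
/- Let m ≥ 1 and let H be a subspace of a ℤ/2-vector space V with basis 𝒰 such that every nonzero element of H has support of cardinality exactly m+1 with respect to 𝒰. Then for any two distinct nonzero elements α, β of H, |S_𝒰(α) ∩ S_𝒰(β)| = (m+1)/2; in particular, if H contains two distinct nonzero elements then m is odd. -/
lemma supp_add {ι : Type*} [DecidableEq ι] (f g : ι →₀ ZMod 2) :
    (f + g).support = symmDiff f.support g.support := by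
  ext i
  simp only [Finsupp.mem_support_iff, Finset.mem_symmDiff, Finsupp.add_apply, not_not]
  revert i; intro i
  exact (by decide : ∀ a b : ZMod 2, (a + b ≠ 0 ↔ (a ≠ 0 ∧ b = 0) ∨ (b ≠ 0 ∧ a = 0))) (f i) (g i)

lemma card_symmDiff' {ι : Type*} [DecidableEq ι] (s t : Finset ι) :
    (symmDiff s t).card + 2 * (s ∩ t).card = s.card + t.card := by
  rw [symmDiff_def, Finset.sup_eq_union, Finset.card_union_of_disjoint (disjoint_sdiff_sdiff)]
  have h1 := Finset.card_sdiff_add_card_inter s t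
  have h2 := Finset.card_sdiff_add_card_inter t s
  rw [Finset.inter_comm t s] at h2
  omega

/-- If every nonzero element of a subspace `H` of a `ℤ/2`-vector space with basis `b`
has support of cardinality exactly `m + 1` (`m ≥ 1`), then the supports of any two
distinct nonzero elements of `H` intersect in exactly `(m+1)/2` elements; in particular
if `H` contains two distinct nonzero elements then `m` is odd. -/
theorem stmt_3 {m : ℕ} (hm : 1 ≤ m) {V : Type*} [AddCommGroup V] [Module (ZMod 2) V]
    {ι : Type*} [DecidableEq ι] (b : Module.Basis ι (ZMod 2) V)
    (H : Submodule (ZMod 2) V)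
    (hsupp : ∀ α ∈ H, α ≠ 0 → (b.repr α).support.card = m + 1) :
    (∀ α ∈ H, ∀ β ∈ H, α ≠ 0 → β ≠ 0 → α ≠ β →
      ((((b.repr α).support ∩ (b.repr β).support).card : ℚ) = (m + 1) / 2)) ∧
    ((∃ α ∈ H, ∃ β ∈ H, α ≠ 0 ∧ β ≠ 0 ∧ α ≠ β) → Odd m) := by
  have key : ∀ α ∈ H, ∀ β ∈ H, α ≠ 0 → β ≠ 0 → α ≠ β →
      2 * ((b.repr α).support ∩ (b.repr β).support).card = m + 1 := by
    intro α hα β hβ hα0 hβ0 hne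
    have hab : α + β ≠ 0 := by
      intro h
      apply hne
      have h2 : (2 : ZMod 2) • β = 0 := by rw [(by rfl : (2 : ZMod 2) = 0), zero_smul]
      rw [two_smul] at h2
      calc α = α + (β + β) := by rw [h2, add_zero]
        _ = (α + β) + β := by abel
        _ = β := by rw [h, zero_add]
    have hsum := hsupp (α + β) (H.add_mem hα hβ) hab
    rw [map_add, supp_add] at hsum
    have hc := card_symmDiff' (b.repr α).support (b.repr β).support
    rw [hsupp α hα hα0, hsupp β hβ hβ0, hsum] at hc
    omega
  constructor
  · intro α hα β hβ hα0 hβ0 hne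
    have := key α hα β hβ hα0 hβ0 hne
    have h2 : (((b.repr α).support ∩ (b.repr β).support).card : ℚ) * 2 = (m:ℚ) + 1 := by
      exact_mod_cast congrArg (Nat.cast (R := ℚ)) (by omega : ((b.repr α).support ∩ (b.repr β).support).card * 2 = m + 1)
    field_simp
    linarith
  · rintro ⟨α, hα, β, hβ, hα0, hβ0, hne⟩
    have := key α hα β hβ hα0 hβ0 hne
    exact Nat.odd_iff.mpr (by omega)
end

section
/- (Fisher's inequality) Let n and k be positive integers, let 𝒰 be a finite set of cardinality n, and let 𝒳 be a collection of subsets of 𝒰 such that |S ∩ T| = k for all distinct S, T ∈ 𝒳. Then |𝒳| ≤ n. -/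
/-- Fisher's inequality: if `𝒰` is a finite set of cardinality `n` and `𝒳` is a family
of subsets of `𝒰` such that any two distinct members of `𝒳` intersect in exactly `k`
elements (`n, k ≥ 1`), then `|𝒳| ≤ n`. -/
theorem stmt_4 {γ : Type*} [DecidableEq γ] (n k : ℕ) (hn : 1 ≤ n) (hk : 1 ≤ k)
    (U : Finset γ) (hU : U.card = n) (X : Finset (Finset γ))
    (hsub : ∀ S ∈ X, S ⊆ U)
    (hint : ∀ S ∈ X, ∀ T ∈ X, S ≠ T → (S ∩ T).card = k) :
    X.card ≤ n := by
  classical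
  by_cases hX1 : X.card ≤ 1
  · exact hX1.trans hn
  push_neg at hX1
  -- every member has at least k elements
  have hsize : ∀ S ∈ X, k ≤ S.card := by
    intro S hS
    obtain ⟨T, hT, hTS⟩ := Finset.exists_mem_ne hX1 S
    have := hint S hS T hT (fun h => hTS h.symm)
    calc k = (S ∩ T).card := this.symm
      _ ≤ S.card := Finset.card_le_card Finset.inter_subset_left
  -- at most one member has exactly k elements
  have huniq : ∀ S ∈ X, ∀ T ∈ X, S.card = k → T.card = k → S = T := by
    intro S hS T hT hSk hTk
    by_contra hne
    have hST := hint S hS T hT hne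
    have h1 : S ∩ T = S :=
      Finset.eq_of_subset_of_card_le Finset.inter_subset_left (by omega)
    have h2 : S ∩ T = T :=
      Finset.eq_of_subset_of_card_le Finset.inter_subset_right (by omega)
    exact hne (h1 ▸ h2)
  -- indicator vectors
  set v : Finset γ → (↥U → ℝ) := fun S x => if ↑x ∈ S then 1 else 0 with hv
  have hdot : ∀ S, S ⊆ U → ∀ T : Finset γ,
      ∑ x : ↥U, v S x * v T x = ((S ∩ T).card : ℝ) := by
    intro S hSU T
    have h1 : ∀ x : ↥U, v S x * v T x = if ↑x ∈ S ∩ T then (1 : ℝ) else 0 := by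
      intro x
      simp only [hv, Finset.mem_inter]
      by_cases h1 : ↑x ∈ S <;> by_cases h2 : ↑x ∈ T <;> simp [h1, h2]
    rw [Finset.sum_congr rfl (fun x _ => h1 x)]
    rw [Finset.sum_coe_sort U (fun x => if x ∈ S ∩ T then (1 : ℝ) else 0)]
    rw [Finset.sum_ite_mem]
    have hinter : U ∩ (S ∩ T) = S ∩ T :=
      Finset.inter_eq_right.mpr (Finset.inter_subset_left.trans hSU)
    rw [hinter]
    simp
  -- linear independence of indicator vectors
  have hli : LinearIndependent ℝ (fun S : ↥X => v ↑S) := by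
    rw [Fintype.linearIndependent_iff]
    intro g hg
    have hgx : ∀ x : ↥U, ∑ S : ↥X, g S * v ↑S x = 0 := by
      intro x
      have := congrFun hg x
      simpa [Finset.sum_apply] using this
    have key : ∑ S : ↥X, ∑ T : ↥X, g S * g T * (((↑S : Finset γ) ∩ ↑T).card : ℝ) = 0 := by
      have step1 : ∀ S : ↥X, ∀ T : ↥X,
          g S * g T * (((↑S : Finset γ) ∩ ↑T).card : ℝ)
            = ∑ x : ↥U, (g S * v ↑S x) * (g T * v ↑T x) := by
        intro S T
        rw [← hdot ↑S (hsub _ S.2) ↑T]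
        rw [Finset.mul_sum]
        apply Finset.sum_congr rfl
        intro x _; ring
      calc ∑ S : ↥X, ∑ T : ↥X, g S * g T * (((↑S : Finset γ) ∩ ↑T).card : ℝ)
          = ∑ S : ↥X, ∑ T : ↥X, ∑ x : ↥U, (g S * v ↑S x) * (g T * v ↑T x) := by
            exact Finset.sum_congr rfl fun S _ => Finset.sum_congr rfl fun T _ => step1 S T
        _ = ∑ S : ↥X, ∑ x : ↥U, ∑ T : ↥X, (g S * v ↑S x) * (g T * v ↑T x) :=
            Finset.sum_congr rfl fun S _ => Finset.sum_comm
        _ = ∑ x : ↥U, ∑ S : ↥X, ∑ T : ↥X, (g S * v ↑S x) * (g T * v ↑T x) :=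
            Finset.sum_comm
        _ = ∑ x : ↥U, (∑ S : ↥X, g S * v ↑S x) * (∑ T : ↥X, g T * v ↑T x) := by
            exact Finset.sum_congr rfl fun x _ => (Finset.sum_mul_sum _ _ _ _).symm
        _ = 0 := by
            apply Finset.sum_eq_zero
            intro x _
            rw [hgx x]; ring
    -- decompose the quadratic form
    have decomp : ∑ S : ↥X, ∑ T : ↥X, g S * g T * (((↑S : Finset γ) ∩ ↑T).card : ℝ)
        = (k : ℝ) * (∑ S : ↥X, g S)^2
          + ∑ S : ↥X, g S^2 * (((↑S : Finset γ).card : ℝ) - k) := by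
      have hc : ∀ S T : ↥X, (((↑S : Finset γ) ∩ ↑T).card : ℝ)
          = (k : ℝ) + (if S = T then ((↑S : Finset γ).card : ℝ) - k else 0) := by
        intro S T
        by_cases h : S = T
        · subst h; simp
        · have := hint ↑S S.2 ↑T T.2 (fun he => h (Subtype.ext he))
          simp [h, this]
      calc ∑ S : ↥X, ∑ T : ↥X, g S * g T * (((↑S : Finset γ) ∩ ↑T).card : ℝ)
          = ∑ S : ↥X, ∑ T : ↥X, (g S * g T * k
              + g S * g T * (if S = T then ((↑S : Finset γ).card : ℝ) - k else 0)) := by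
            apply Finset.sum_congr rfl; intro S _
            apply Finset.sum_congr rfl; intro T _
            rw [hc S T]; ring
        _ = (k : ℝ) * (∑ S : ↥X, g S)^2
              + ∑ S : ↥X, g S^2 * (((↑S : Finset γ).card : ℝ) - k) := by
            rw [Finset.sum_congr rfl (fun S _ => Finset.sum_add_distrib)]
            rw [Finset.sum_add_distrib]
            congr 1
            · rw [sq, Finset.sum_mul_sum, Finset.mul_sum]
              apply Finset.sum_congr rfl; intro S _
              rw [Finset.mul_sum]
              exact Finset.sum_congr rfl fun T _ => by ring
            · apply Finset.sum_congr rfl; intro S _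
              have hrw : ∀ T : ↥X, g S * g T *
                  (if S = T then ((↑S : Finset γ).card : ℝ) - k else 0)
                  = if S = T then g S * g T * (((↑S : Finset γ).card : ℝ) - k) else 0 := by
                intro T; split_ifs <;> ring
              rw [Finset.sum_congr rfl fun T _ => hrw T]
              rw [Finset.sum_ite_eq Finset.univ S
                (fun T => g S * g T * (((↑S : Finset γ).card : ℝ) - k))]
              simp [sq]
      -- done
    rw [decomp] at key
    have hterm1 : 0 ≤ (k : ℝ) * (∑ S : ↥X, g S)^2 := by positivity
    have htermS : ∀ S : ↥X, 0 ≤ g S^2 * (((↑S : Finset γ).card : ℝ) - k) := by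
      intro S
      have := hsize ↑S S.2
      have : (k : ℝ) ≤ ((↑S : Finset γ).card : ℝ) := by exact_mod_cast this
      have h2 : 0 ≤ ((↑S : Finset γ).card : ℝ) - k := by linarith
      positivity
    have hterm2 : 0 ≤ ∑ S : ↥X, g S^2 * (((↑S : Finset γ).card : ℝ) - k) :=
      Finset.sum_nonneg fun S _ => htermS S
    have hz1 : (k : ℝ) * (∑ S : ↥X, g S)^2 = 0 := by linarith
    have hz2 : ∑ S : ↥X, g S^2 * (((↑S : Finset γ).card : ℝ) - k) = 0 := by linarith
    have hsumg : ∑ S : ↥X, g S = 0 := by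
      have hk' : (0 : ℝ) < k := by exact_mod_cast hk
      have := mul_eq_zero.mp hz1
      rcases this with h | h
      · exact absurd h (ne_of_gt hk')
      · exact pow_eq_zero_iff (n := 2) (by norm_num) |>.mp h
    have hzero : ∀ S : ↥X, g S^2 * (((↑S : Finset γ).card : ℝ) - k) = 0 := by
      intro S
      exact (Finset.sum_eq_zero_iff_of_nonneg (fun S _ => htermS S)).mp hz2 S
        (Finset.mem_univ S)
    have hbig : ∀ S : ↥X, (↑S : Finset γ).card ≠ k → g S = 0 := by
      intro S hSk
      have hkc : ((↑S : Finset γ).card : ℝ) - k ≠ 0 := by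
        have := hsize ↑S S.2
        have hlt : k < (↑S : Finset γ).card := lt_of_le_of_ne this (Ne.symm hSk)
        have : (k : ℝ) < ((↑S : Finset γ).card : ℝ) := by exact_mod_cast hlt
        linarith
      have := mul_eq_zero.mp (hzero S)
      rcases this with h | h
      · exact pow_eq_zero_iff (n := 2) (by norm_num) |>.mp h
      · exact absurd h hkc
    intro i
    by_cases hik : (↑i : Finset γ).card = k
    · -- all others vanish, so g i = sum = 0
      have : ∑ S : ↥X, g S = g i := by
        apply Finset.sum_eq_single
        · intro b _ hbi
          apply hbig
          intro hbk
          exact hbi (Subtype.ext (huniq ↑b b.2 ↑i i.2 hbk hik))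
        · intro h; exact absurd (Finset.mem_univ i) h
      rw [← this, hsumg]
    · exact hbig i hik
  -- conclude by dimension count
  have := hli.fintype_card_le_finrank
  rw [Module.finrank_pi ℝ] at this
  simpa [Fintype.card_coe, hU] using this
end

section
/- Let m ≥ 2 and let V be a 2m-dimensional ℤ/2-vector space with basis 𝒰. There is no m-dimensional subspace H of V such that every nonzero element of H has support of cardinality exactly m+1 with respect to 𝒰. -/
private lemma aux_pow_gt {m : ℕ} (hm : 4 ≤ m) : m + 1 < 2 ^ (m - 1) := by
  induction m with
  | zero => omega
  | succ n ih =>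
    rcases Nat.lt_or_ge n 4 with h | h
    · interval_cases n <;> simp_all
    · have := ih (by omega)
      have hn : n - 1 + 1 = n + 1 - 1 := by omega
      calc n + 1 + 1 < 2 ^ (n - 1) + 2 ^ (n - 1) := by omega
        _ = 2 ^ (n - 1 + 1) := by ring
        _ = 2 ^ (n + 1 - 1) := by rw [hn]

/-- Case II of Proposition "quality control": if `V` is a `2m`-dimensional `ℤ/2`-vector
space with basis `b` (`m ≥ 2`), there is no `m`-dimensional subspace `H` of `V` all of
whose nonzero elements have support of cardinality exactly `m + 1`. -/
theorem stmt_6 {m : ℕ} (hm : 2 ≤ m) {V : Type*} [AddCommGroup V] [Module (ZMod 2) V]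
    {ι : Type*} [Fintype ι] (b : Module.Basis ι (ZMod 2) V) (hcard : Fintype.card ι = 2 * m) :
    ¬ ∃ H : Submodule (ZMod 2) V, Module.finrank (ZMod 2) H = m ∧
      ∀ α ∈ H, α ≠ 0 → (b.repr α).support.card = m + 1 := by
  classical
  rintro ⟨H, hH, hsupp⟩
  haveI : Fintype V := Module.fintypeOfFintype b
  haveI : Module.Finite (ZMod 2) V := Module.Finite.of_basis b
  -- cardinality of H
  have hcardH : Fintype.card H = 2 ^ m := by
    rw [Module.card_fintype (Module.finBasis (ZMod 2) H)]
    simp [hH, ZMod.card]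
  set T : Finset V := Finset.univ.filter (fun α => α ∈ H) with hT
  have hTcard : T.card = 2 ^ m := by
    rw [hT, ← Fintype.card_subtype]
    exact hcardH
  set S : Finset V := Finset.univ.filter (fun α => α ∈ H ∧ α ≠ 0) with hS
  have hSeq : S = T.erase 0 := by
    ext α
    simp only [hS, hT, Finset.mem_erase, Finset.mem_filter, Finset.mem_univ, true_and]
    tauto
  have hScard : S.card = 2 ^ m - 1 := by
    rw [hSeq, Finset.card_erase_of_mem, hTcard]
    simp [hT, H.zero_mem]
  -- support cardinality as a sum over coordinates
  have hsupport : ∀ α : V, (b.repr α).support.card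
      = ∑ i : ι, if b.repr α i ≠ 0 then 1 else 0 := by
    intro α
    rw [← Finset.card_filter]
    congr 1
    ext i
    simp [Finsupp.mem_support_iff]
  -- double counting
  have hkey : (2 ^ m - 1) * (m + 1)
      = ∑ i : ι, (S.filter (fun α => b.repr α i ≠ 0)).card := by
    have h1 : ∑ α ∈ S, (b.repr α).support.card = (2 ^ m - 1) * (m + 1) := by
      rw [Finset.sum_congr rfl (fun α hα => ?_), Finset.sum_const, hScard, smul_eq_mul]
      simp only [hS, Finset.mem_filter] at hα
      exact hsupp α hα.2.1 hα.2.2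
    rw [← h1]
    calc ∑ α ∈ S, (b.repr α).support.card
        = ∑ α ∈ S, ∑ i : ι, if b.repr α i ≠ 0 then 1 else 0 := by
          exact Finset.sum_congr rfl fun α _ => hsupport α
      _ = ∑ i : ι, ∑ α ∈ S, if b.repr α i ≠ 0 then 1 else 0 := Finset.sum_comm
      _ = ∑ i : ι, (S.filter (fun α => b.repr α i ≠ 0)).card := by
          exact Finset.sum_congr rfl fun i _ => (Finset.card_filter _ _).symm
  -- each coordinate count is 0 or 2^(m-1)
  have hone : ∀ x : ZMod 2, x ≠ 0 → x = 1 := by decide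
  have hk : ∀ i : ι, (S.filter (fun α => b.repr α i ≠ 0)).card = 0
      ∨ (S.filter (fun α => b.repr α i ≠ 0)).card = 2 ^ (m - 1) := by
    intro i
    by_cases hz : ∀ α ∈ H, b.repr α i = 0
    · left
      rw [Finset.card_eq_zero, Finset.filter_eq_empty_iff]
      intro α hα
      simp only [hS, Finset.mem_filter] at hα
      simpa using hz α hα.2.1
    · right
      push_neg at hz
      obtain ⟨β, hβH, hβi⟩ := hz
      have hβ1 : b.repr β i = 1 := hone _ hβi
      have hβ2 : β + β = 0 := by
        have : β + β = (2 : ZMod 2) • β := (two_smul _ β).symm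
        rw [this, show (2 : ZMod 2) = 0 by decide, zero_smul]
      -- A = T.filter (coeff ≠ 0) equals S.filter (coeff ≠ 0)
      have hAeq : S.filter (fun α => b.repr α i ≠ 0)
          = T.filter (fun α => b.repr α i ≠ 0) := by
        ext α
        simp only [hS, hT, Finset.mem_filter, Finset.mem_univ, true_and]
        constructor
        · tauto
        · rintro ⟨h1, h2⟩
          exact ⟨⟨h1, fun h0 => by simp [h0] at h2⟩, h2⟩
      -- bijection between the two fibers
      have hbij : (T.filter (fun α => b.repr α i ≠ 0)).card
          = (T.filter (fun α => ¬ b.repr α i ≠ 0)).card := by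
        apply Finset.card_bij (fun α _ => α + β)
        · intro α hα
          simp only [hT, Finset.mem_filter, Finset.mem_univ, true_and, not_not] at hα ⊢
          refine ⟨H.add_mem hα.1 hβH, ?_⟩
          rw [map_add, Finsupp.add_apply, hone _ hα.2, hβ1]
          decide
        · intro α₁ h₁ α₂ h₂ h
          exact add_right_cancel h
        · intro γ hγ
          simp only [hT, Finset.mem_filter, Finset.mem_univ, true_and, not_not] at hγ
          refine ⟨γ + β, ?_, ?_⟩
          · simp only [hT, Finset.mem_filter, Finset.mem_univ, true_and]
            refine ⟨H.add_mem hγ.1 hβH, ?_⟩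
            rw [map_add, Finsupp.add_apply, hγ.2, hβ1]
            decide
          · rw [add_assoc, hβ2, add_zero]
      have hsplit : (T.filter (fun α => b.repr α i ≠ 0)).card
          + (T.filter (fun α => ¬ b.repr α i ≠ 0)).card = T.card :=
        Finset.card_filter_add_card_filter_not _
      have hpow : 2 ^ m = 2 ^ (m - 1) * 2 := by
        rw [← pow_succ]
        congr 1
        omega
      rw [hAeq]
      omega
  -- divisibility and bound
  have hdvd : 2 ^ (m - 1) ∣ (2 ^ m - 1) * (m + 1) := by
    rw [hkey]
    exact Finset.dvd_sum fun i _ => by rcases hk i with h | h <;> simp [h]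
  have hbound : (2 ^ m - 1) * (m + 1) ≤ 2 * m * 2 ^ (m - 1) := by
    rw [hkey]
    calc ∑ i : ι, (S.filter (fun α => b.repr α i ≠ 0)).card
        ≤ ∑ _i : ι, 2 ^ (m - 1) :=
          Finset.sum_le_sum fun i _ => by rcases hk i with h | h <;> omega
      _ = 2 * m * 2 ^ (m - 1) := by
          rw [Finset.sum_const, smul_eq_mul, Finset.card_univ, hcard]
  have hcop : Nat.Coprime (2 ^ (m - 1)) (2 ^ m - 1) := by
    apply Nat.Coprime.pow_left
    have : 2 ^ m % 2 = 0 := by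
      have : (2 : ℕ) ∣ 2 ^ m := dvd_pow_self 2 (by omega)
      omega
    have h1 : 1 ≤ 2 ^ m := Nat.one_le_two_pow
    rw [Nat.coprime_comm, Nat.coprime_two_right, Nat.odd_iff]
    omega
  have hdvd2 : 2 ^ (m - 1) ∣ m + 1 := hcop.dvd_of_dvd_mul_left hdvd
  have hc : m = 2 ∨ m = 3 ∨ 4 ≤ m := by omega
  rcases hc with rfl | rfl | hge
  · norm_num at hdvd2
  · norm_num at hbound
  · have h1 : 2 ^ (m - 1) ≤ m + 1 := Nat.le_of_dvd (by omega) hdvd2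
    have h2 := aux_pow_gt hge
    omega
end
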